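/- arXiv:1509.03383 — 2 statements merged into one kernel-verified Lean document; each statement's English description precedes it below -/
import Mathlib

section
/- Let L be a left ideal of A* containing A^k. Then τ_L is a right congruence on A^k (with respect to the action u.a = suffix of length k of ua) if and only if L is a two-sided ideal of A*, if and only if the set of suffix-minimal elements Lβ_ℓ is a semaphore code. -/
/-- `ξ_k`: the suffix of length `k` of `w` (or `w` itself if it is shorter). -/
def xiK {A : Type*} (k : ℕ) (w : List A) : List A := w.drop (w.length - k)

/-- The relation `τ_L`: `u` and `v` have a common suffix in `L`. -/
def tauRel {A : Type*} (L : Set (List A)) (u v : List A) : Prop :=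
  ∃ w ∈ L, w <:+ u ∧ w <:+ v

/-- A suffix code: an antichain with respect to the suffix order. -/
def SuffixCode {A : Type*} (S : Set (List A)) : Prop :=
  ∀ u ∈ S, ∀ v ∈ S, u <:+ v → u = v

/-- A semaphore code: a suffix code `S` with `S A ⊆ A* S`. -/
def IsSemaphore {A : Type*} (S : Set (List A)) : Prop :=
  SuffixCode S ∧ ∀ s ∈ S, ∀ a : A, ∃ t ∈ S, t <:+ s ++ [a]

/-- `L βℓ`: the suffix-minimal elements of `L`. -/
def suffMin {A : Type*} (L : Set (List A)) : Set (List A) :=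
  {w ∈ L | ∀ v ∈ L, v <:+ w → v = w}

section Aux

variable {A : Type*}

/-- If `s` and `t` are both suffixes of `w` and `s` is shorter, then `s <:+ t`. -/
lemma aux_suffix_of_le {s t w : List A} (hs : s <:+ w) (ht : t <:+ w)
    (h : s.length ≤ t.length) : s <:+ t := by
  rcases List.suffix_or_suffix_of_suffix hs ht with h1 | h1
  · exact h1
  · rw [List.IsSuffix.eq_of_length h1 (le_antisymm h1.length_le h)]

lemma aux_append_suffix {w u : List A} (h : w <:+ u) (x : List A) :
    w ++ x <:+ u ++ x := by
  obtain ⟨p, rfl⟩ := h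
  exact ⟨p, (List.append_assoc _ _ _).symm⟩

/-- Every element of `L` has a suffix-minimal suffix in `L`. -/
lemma aux_exists_suffMin {L : Set (List A)} :
    ∀ (n : ℕ) (w : List A), w.length ≤ n → w ∈ L → ∃ t ∈ suffMin L, t <:+ w := by
  intro n
  induction n with
  | zero =>
    intro w hw hwL
    refine ⟨w, ⟨hwL, fun v hv hvw => ?_⟩, List.suffix_rfl⟩
    exact List.IsSuffix.eq_of_length hvw
      (le_antisymm hvw.length_le (by omega))
  | succ n ih =>
    intro w hw hwL
    by_cases hmin : ∀ v ∈ L, v <:+ w → v = w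
    · exact ⟨w, ⟨hwL, hmin⟩, List.suffix_rfl⟩
    · push_neg at hmin
      obtain ⟨v, hvL, hvw, hne⟩ := hmin
      have hlt : v.length < w.length :=
        lt_of_le_of_ne hvw.length_le
          (fun he => hne (List.IsSuffix.eq_of_length hvw he))
      obtain ⟨t, ht, htv⟩ := ih v (by omega) hvL
      exact ⟨t, ht, htv.trans hvw⟩

/-- A left ideal closed under appending single letters is a two-sided ideal. -/
lemma aux_two_sided {L : Set (List A)}
    (hL : ∀ u w : List A, w ∈ L → u ++ w ∈ L)
    (hstep : ∀ w ∈ L, ∀ a : A, w ++ [a] ∈ L) :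
    ∀ u v w : List A, w ∈ L → u ++ w ++ v ∈ L := by
  have hright : ∀ w ∈ L, ∀ v : List A, w ++ v ∈ L := by
    intro w hw v
    induction v using List.reverseRecOn with
    | nil => simpa using hw
    | append_singleton v a ih =>
      rw [← List.append_assoc]
      exact hstep _ ih a
  intro u v w hw
  rw [List.append_assoc]
  exact hL u _ (hright w hw v)

/-- A long enough suffix of `replicate n b ++ z` starts with `b`. -/
lemma aux_head_of_suffix {b : A} {n : ℕ} {z t : List A}
    (ht : t <:+ List.replicate n b ++ z) (hgt : z.length < t.length) :
    t[0]? = some b := by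
  obtain ⟨p, hp⟩ := ht
  have hlen : p.length + t.length = n + z.length := by
    have := congrArg List.length hp
    simpa using this
  have hpn : p.length < n := by omega
  have h0 : 0 < t.length := by omega
  have h1 : (List.replicate n b ++ z)[p.length]'(by simp; omega) = b := by
    rw [List.getElem_append_left (by simpa using hpn)]
    exact List.getElem_replicate ..
  have h2 : (p ++ t)[p.length]'(by simp; omega) = t[0]'h0 := by
    rw [List.getElem_append_right le_rfl]
    simp
  have h3 : (p ++ t)[p.length]'(by simp; omega) =
      (List.replicate n b ++ z)[p.length]'(by simp; omega) :=
    List.getElem_of_eq hp _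
  rw [List.getElem?_eq_getElem h0]
  exact congrArg some (h2.symm.trans (h3.trans h1))

end Aux

/-- let `L` be a left ideal of `A*` containing `A^k`.  Then `τ_L` is a
right congruence on `A^k` (for the action `u.a = ξ_k (u a)`) iff `L` is a two-sided
ideal of `A*`, iff the set of suffix-minimal elements `L βℓ` is a semaphore code. -/
theorem tauRel_rightCongruence_iff {A : Type*} [Fintype A] (hA : 1 < Fintype.card A)
    (k : ℕ) (hk : 1 ≤ k) (L : Set (List A))
    (hL : ∀ u w : List A, w ∈ L → u ++ w ∈ L)
    (hLne : L.Nonempty)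
    (hLk : ∀ w : List A, w.length = k → w ∈ L) :
    ((Equivalence (fun u v : {w : List A // w.length = k} => tauRel L u.val v.val) ∧
        ∀ u v : List A, u.length = k → v.length = k → tauRel L u v →
          ∀ a : A, tauRel L (xiK k (u ++ [a])) (xiK k (v ++ [a]))) ↔
      (∀ u v w : List A, w ∈ L → u ++ w ++ v ∈ L)) ∧
    ((∀ u v w : List A, w ∈ L → u ++ w ++ v ∈ L) ↔ IsSemaphore (suffMin L)) := by
  constructor
  · constructor
    · -- congruence → two-sided ideal
      rintro ⟨heqv, hcong⟩
      apply aux_two_sided hL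
      intro w hw a
      rcases le_or_gt k w.length with hge | hlt
      · -- long word: the length-k suffix of w ++ [a] is in L
        have hdrop : List.drop (w.length + 1 - k) (w ++ [a]) ∈ L :=
          hLk _ (by simp; omega)
        have htd := List.take_append_drop (w.length + 1 - k) (w ++ [a])
        rw [← htd]
        exact hL _ _ hdrop
      · -- short word: use the right congruence with two paddings
        obtain ⟨b, c, hbc⟩ := Fintype.exists_pair_of_one_lt_card hA
        set m := k - w.length with hm
        have hm1 : 1 ≤ m := by omega
        set u : List A := List.replicate m b ++ w with hu
        set v : List A := List.replicate m c ++ w with hv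
        have hul : u.length = k := by simp [hu]; omega
        have hvl : v.length = k := by simp [hv]; omega
        have htuv : tauRel L u v :=
          ⟨w, hw, List.suffix_append _ _, List.suffix_append _ _⟩
        have key : ∀ (d : A) (x : List A), x.length = k →
            xiK k ((List.replicate m d ++ w) ++ [a]) =
              List.replicate (m - 1) d ++ (w ++ [a]) := by
          intro d x _
          have hrepl : (List.replicate m d ++ w) ++ [a] =
              d :: (List.replicate (m - 1) d ++ (w ++ [a])) := by
            conv_lhs => rw [show m = (m - 1) + 1 by omega]
            simp [List.replicate_succ]
          unfold xiK
          rw [hrepl]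
          have : (d :: (List.replicate (m - 1) d ++ (w ++ [a]))).length - k = 1 := by
            simp
            omega
          rw [this]
          simp
        have h' := hcong u v hul hvl htuv a
        rw [hu, hv, key b u hul, key c v hvl] at h'
        obtain ⟨t, htL, ht1, ht2⟩ := h'
        have htw : t <:+ w ++ [a] := by
          rcases le_or_gt t.length (w ++ [a]).length with hle | hgt
          · exact aux_suffix_of_le ht1 (List.suffix_append _ _) hle
          · exfalso
            have hb := aux_head_of_suffix ht1 hgt
            have hc := aux_head_of_suffix ht2 hgt
            rw [hb] at hc
            exact hbc (Option.some.inj hc)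
        obtain ⟨p, hp⟩ := htw
        rw [← hp]
        exact hL p t htL
    · -- two-sided ideal → congruence
      intro h2
      constructor
      · constructor
        · intro u
          exact ⟨u.val, hLk u.val u.prop, List.suffix_rfl, List.suffix_rfl⟩
        · rintro u v ⟨w, hw, h1, h2⟩
          exact ⟨w, hw, h2, h1⟩
        · rintro u v t ⟨w1, hw1, h11, h12⟩ ⟨w2, hw2, h21, h22⟩
          rcases List.suffix_or_suffix_of_suffix h12 h21 with h | h
          · exact ⟨w1, hw1, h11, h.trans h22⟩
          · exact ⟨w2, hw2, h.trans h11, h22⟩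
      · rintro u v hu hv ⟨w, hw, hwu, hwv⟩ a
        have hwk : w.length ≤ k := hu ▸ hwu.length_le
        rcases eq_or_lt_of_le hwk with heq | hlt
        · -- w = u = v
          have huv : u = v := by
            have h1 : w = u := List.IsSuffix.eq_of_length hwu (by omega)
            have h2 : w = v := List.IsSuffix.eq_of_length hwv (by omega)
            rw [← h1, h2]
          subst huv
          refine ⟨xiK k (u ++ [a]), hLk _ ?_, List.suffix_rfl, List.suffix_rfl⟩
          unfold xiK
          simp [hu]
        · -- |w| < k : take w ++ [a] as common suffix
          have hwa : w ++ [a] ∈ L := by simpa using h2 [] [a] w hw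
          have hxl : ∀ x : List A, x.length = k → (xiK k (x ++ [a])).length = k := by
            intro x hx
            unfold xiK
            simp [hx]
          have hsuf : ∀ x : List A, x.length = k → w <:+ x →
              w ++ [a] <:+ xiK k (x ++ [a]) := by
            intro x hx hwx
            refine aux_suffix_of_le (aux_append_suffix hwx [a])
              (List.drop_suffix _ _) ?_
            rw [show (xiK k (x ++ [a])).length = k from hxl x hx] at *
            · simp
              omega
          exact ⟨w ++ [a], hwa, hsuf u hu hwu, hsuf v hv hwv⟩
  · constructor
    · -- two-sided ideal → semaphore
      intro h2
      constructor
      · exact fun u hu v hv h => hv.2 u hu.1 h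
      · intro s hs a
        have hsa : s ++ [a] ∈ L := by simpa using h2 [] [a] s hs.1
        exact aux_exists_suffMin (s ++ [a]).length _ le_rfl hsa
    · -- semaphore → two-sided ideal
      rintro ⟨hcode, hsem⟩
      apply aux_two_sided hL
      intro w hw a
      obtain ⟨s, hs, hsw⟩ := aux_exists_suffMin w.length w le_rfl hw
      obtain ⟨t, ht, hts⟩ := hsem s hs a
      have htw : t <:+ w ++ [a] := hts.trans (aux_append_suffix hsw [a])
      obtain ⟨p, hp⟩ := htw
      rw [← hp]
      exact hL p t ht.1
end

section
/- For any right congruence ρ on A^k, the sets A*Λ_ρ and A*Λ'_ρ coincide and are two-sided ideals of A* containing A^k, where Λ_ρ = {lcs(C) : C ∈ A^k/ρ} and Λ'_ρ = {lcs(u,v) : (u,v) ∈ ρ}. -/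
/-- Words of length `k` over `A`. -/
abbrev Word (A : Type*) (k : ℕ) := {w : List A // w.length = k}

/-- The shift action of a letter: `u.a` is the suffix of length `k` of `u a`. -/
def act {A : Type*} (k : ℕ) (a : A) (u : Word A k) : Word A k :=
  ⟨(u.val ++ [a]).drop ((u.val ++ [a]).length - k), by
    have h := u.2
    simp only [List.length_drop, List.length_append, List.length_cons,
      List.length_nil, h]
    omega⟩

/-- A right congruence on `A^k`. -/
def IsRC {A : Type*} (k : ℕ) (r : Word A k → Word A k → Prop) : Prop :=
  Equivalence r ∧ ∀ u v : Word A k, r u v → ∀ a : A, r (act k a u) (act k a v)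

/-- `w` is the longest common suffix of `u` and `v`. -/
def IsLcs {A : Type*} (u v w : List A) : Prop :=
  w <:+ u ∧ w <:+ v ∧ ∀ w' : List A, w' <:+ u → w' <:+ v → w' <:+ w

/-- `w` is the longest common suffix of the `ρ`-class of `u`. -/
def IsLcsClass {A : Type*} {k : ℕ} (ρ : Word A k → Word A k → Prop)
    (u : Word A k) (w : List A) : Prop :=
  (∀ v : Word A k, ρ u v → w <:+ v.val) ∧
    ∀ w' : List A, (∀ v : Word A k, ρ u v → w' <:+ v.val) → w' <:+ w

/-- `Λ_ρ = { lcs(C) : C ∈ A^k/ρ }`. -/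
def Lam {A : Type*} {k : ℕ} (ρ : Word A k → Word A k → Prop) : Set (List A) :=
  {w | ∃ u : Word A k, IsLcsClass ρ u w}

/-- `Λ'_ρ = { lcs(u,v) : (u,v) ∈ ρ }`. -/
def Lam' {A : Type*} {k : ℕ} (ρ : Word A k → Word A k → Prop) : Set (List A) :=
  {w | ∃ u v : Word A k, ρ u v ∧ IsLcs u.val v.val w}

/-- `A* X`. -/
def starMul {A : Type*} (X : Set (List A)) : Set (List A) :=
  {w | ∃ u : List A, ∃ x ∈ X, w = u ++ x}


section Aux

variable {A : Type*} {k : ℕ}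

lemma suffix_of_suffix_length_le' {l₁ l₂ l : List A}
    (h₁ : l₁ <:+ l) (h₂ : l₂ <:+ l) (h : l₁.length ≤ l₂.length) : l₁ <:+ l₂ := by
  rw [← List.reverse_prefix] at h₁ h₂ ⊢
  exact List.prefix_of_prefix_length_le h₁ h₂ (by simpa using h)

lemma eq_drop_of_suffix {w u : List A} (h : w <:+ u) :
    w = u.drop (u.length - w.length) := by
  obtain ⟨t, rfl⟩ := h
  rw [List.length_append, Nat.add_sub_cancel, List.drop_left]

lemma exists_lcsClass (ρ : Word A k → Word A k → Prop)
    (href : ∀ u, ρ u u) (u : Word A k) :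
    ∃ x, IsLcsClass ρ u x ∧ x <:+ u.val := by
  classical
  set P : ℕ → Prop := fun n => ∀ v : Word A k, ρ u v → u.val.drop (k - n) <:+ v.val with hPdef
  have hP0 : P 0 := by
    intro v _
    have h := List.drop_length (l := u.val)
    rw [u.2] at h
    rw [Nat.sub_zero, h]
    exact List.nil_suffix
  set N := Nat.findGreatest P k with hNdef
  have hN : P N := Nat.findGreatest_spec (Nat.zero_le k) hP0
  have hNk : N ≤ k := Nat.findGreatest_le k
  have hxlen : (u.val.drop (k - N)).length = N := by
    rw [List.length_drop, u.2]; omega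
  refine ⟨u.val.drop (k - N), ⟨hN, ?_⟩, List.drop_suffix _ _⟩
  intro w' hw'
  have hwu : w' <:+ u.val := hw' u (href u)
  have hwk : w'.length ≤ k := by
    have := hwu.length_le; rw [u.2] at this; exact this
  have hPw : P w'.length := by
    intro v hv
    have hdrop : w' = u.val.drop (k - w'.length) := by
      have := eq_drop_of_suffix hwu; rwa [u.2] at this
    rw [← hdrop]; exact hw' v hv
  have hle : w'.length ≤ N := Nat.le_findGreatest hwk hPw
  exact suffix_of_suffix_length_le' hwu (List.drop_suffix _ _) (by rw [hxlen]; exact hle)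

lemma exists_lcs (u v : Word A k) : ∃ w, IsLcs u.val v.val w := by
  classical
  set P : ℕ → Prop := fun n => u.val.drop (k - n) <:+ v.val with hPdef
  have hP0 : P 0 := by
    show u.val.drop (k - 0) <:+ v.val
    have h := List.drop_length (l := u.val)
    rw [u.2] at h
    rw [Nat.sub_zero, h]
    exact List.nil_suffix
  set N := Nat.findGreatest P k with hNdef
  have hN : P N := Nat.findGreatest_spec (Nat.zero_le k) hP0
  have hNk : N ≤ k := Nat.findGreatest_le k
  refine ⟨u.val.drop (k - N), List.drop_suffix _ _, hN, ?_⟩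
  intro w' h1 h2
  have hwk : w'.length ≤ k := by
    have := h1.length_le; rw [u.2] at this; exact this
  have hdrop : w' = u.val.drop (k - w'.length) := by
    have := eq_drop_of_suffix h1; rwa [u.2] at this
  have hPw : P w'.length := by show _ <:+ _; rw [← hdrop]; exact h2
  have hle : w'.length ≤ N := Nat.le_findGreatest hwk hPw
  refine suffix_of_suffix_length_le' h1 (List.drop_suffix _ _) ?_
  rw [List.length_drop, u.2]; omega

lemma lcsClass_mem_Lam' (ρ : Word A k → Word A k → Prop) (hρ : IsRC k ρ)
    {u : Word A k} {x : List A} (hx : IsLcsClass ρ u x) :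
    ∃ v, ρ u v ∧ IsLcs u.val v.val x := by
  classical
  set S : Set ℕ := {m | ∃ v w, ρ u v ∧ IsLcs u.val v.val w ∧ w.length = m} with hSdef
  have hSne : S.Nonempty := by
    obtain ⟨w, hw⟩ := exists_lcs u u
    exact ⟨w.length, u, w, hρ.1.refl u, hw, rfl⟩
  obtain ⟨v₀, w₀, hv₀, hw₀, hlen₀⟩ := Nat.sInf_mem hSne
  have hmin : ∀ v, ρ u v → w₀ <:+ v.val := by
    intro v hv
    obtain ⟨wv, hwv⟩ := exists_lcs u v
    have hle : sInf S ≤ wv.length := Nat.sInf_le ⟨v, wv, hv, hwv, rfl⟩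
    have h1 : w₀ <:+ wv := suffix_of_suffix_length_le' hw₀.1 hwv.1 (by omega)
    exact h1.trans hwv.2.1
  have h1 : w₀ <:+ x := hx.2 w₀ hmin
  have h2 : x <:+ w₀ := hw₀.2.2 x (hx.1 u (hρ.1.refl u)) (hx.1 v₀ hv₀)
  have hxw : x = w₀ := h2.eq_of_length (le_antisymm h2.length_le h1.length_le)
  exact ⟨v₀, hv₀, hxw ▸ hw₀⟩

lemma act_val (hk : 1 ≤ k) (a : A) (u : Word A k) :
    (act k a u).val = u.val.drop 1 ++ [a] := by
  show (u.val ++ [a]).drop ((u.val ++ [a]).length - k) = _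
  have h1 : (u.val ++ [a]).length - k = 1 := by
    rw [List.length_append, u.2]; simp
  rw [h1, List.drop_append_of_le_length (by rw [u.2]; omega)]

lemma step_lemma (hk : 1 ≤ k) (ρ : Word A k → Word A k → Prop) (hρ : IsRC k ρ)
    {u : Word A k} {x : List A} (hx : IsLcsClass ρ u x) (a : A) :
    ∃ y, y ∈ Lam ρ ∧ y <:+ x ++ [a] := by
  obtain ⟨y, hy, hyu⟩ := exists_lcsClass ρ hρ.1.refl (act k a u)
  refine ⟨y, ⟨_, hy⟩, ?_⟩
  rcases y.eq_nil_or_concat' with rfl | ⟨l, b, rfl⟩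
  · exact List.nil_suffix
  · rw [act_val hk] at hyu
    obtain ⟨t, ht⟩ := hyu
    rw [← List.append_assoc] at ht
    have hba : b = a := by
      have := (List.append_inj' ht rfl).2
      simpa using this
    have hl : l <:+ x := by
      apply hx.2
      intro v hv
      have h2 := hy.1 (act k a v) (hρ.2 u v hv a)
      rw [act_val hk] at h2
      obtain ⟨s, hs⟩ := h2
      rw [← List.append_assoc, hba] at hs
      have h3 : s ++ l = v.val.drop 1 := (List.append_inj' hs rfl).1
      exact (show l <:+ v.val.drop 1 from ⟨s, h3⟩).trans (List.drop_suffix _ _)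
    obtain ⟨s, hs⟩ := hl
    exact ⟨s, by rw [← List.append_assoc, hs, hba]⟩

end Aux

/-- for any right congruence `ρ` on `A^k`, `A*Λ_ρ = A*Λ'_ρ` is a
two-sided ideal of `A*` containing `A^k`. -/
theorem starMul_Lam_ideal {A : Type*} [Fintype A] [Nonempty A]
    (k : ℕ) (hk : 1 ≤ k) (ρ : Word A k → Word A k → Prop) (hρ : IsRC k ρ) :
    starMul (Lam ρ) = starMul (Lam' ρ) ∧
    (∀ u v w : List A, w ∈ starMul (Lam ρ) → u ++ w ++ v ∈ starMul (Lam ρ)) ∧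
    (∀ w : List A, w.length = k → w ∈ starMul (Lam ρ)) := by
  classical
  have href : ∀ u : Word A k, ρ u u := hρ.1.refl
  have hmemk : ∀ w : List A, w.length = k → w ∈ starMul (Lam ρ) := by
    intro w hw
    obtain ⟨x, hx, hxs⟩ := exists_lcsClass ρ href ⟨w, hw⟩
    obtain ⟨t, ht⟩ := hxs
    exact ⟨t, x, ⟨⟨w, hw⟩, hx⟩, ht.symm⟩
  have hstep : ∀ w ∈ starMul (Lam ρ), ∀ a : A, w ++ [a] ∈ starMul (Lam ρ) := by
    rintro w ⟨t, x, ⟨u, hx⟩, rfl⟩ a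
    obtain ⟨y, hy, hsuf⟩ := step_lemma hk ρ hρ hx a
    obtain ⟨s, hs⟩ := hsuf
    exact ⟨t ++ s, y, hy, by simp only [List.append_assoc, ← hs]⟩
  have hright : ∀ (v : List A), ∀ w ∈ starMul (Lam ρ), w ++ v ∈ starMul (Lam ρ) := by
    intro v
    induction v with
    | nil => intro w hw; simpa using hw
    | cons a v ih =>
      intro w hw
      have h2 : w ++ a :: v = (w ++ [a]) ++ v := by simp
      rw [h2]; exact ih _ (hstep w hw a)
  have hleft : ∀ w ∈ starMul (Lam ρ), ∀ u : List A, u ++ w ∈ starMul (Lam ρ) := by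
    rintro w ⟨t, x, hx, rfl⟩ u
    exact ⟨u ++ t, x, hx, by rw [List.append_assoc]⟩
  refine ⟨?_, ?_, hmemk⟩
  · apply Set.Subset.antisymm
    · rintro w ⟨t, x, ⟨u, hx⟩, rfl⟩
      obtain ⟨v, hv, hlcs⟩ := lcsClass_mem_Lam' ρ hρ hx
      exact ⟨t, x, ⟨u, v, hv, hlcs⟩, rfl⟩
    · rintro w ⟨t, x, ⟨u, v, huv, hlcs⟩, rfl⟩
      obtain ⟨y, hy, hysuf⟩ := exists_lcsClass ρ href u
      have h1 : y <:+ x := hlcs.2.2 y (hy.1 u (href u)) (hy.1 v huv)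
      obtain ⟨s, hs⟩ := h1
      exact ⟨t ++ s, y, ⟨u, hy⟩, by rw [← hs, List.append_assoc]⟩
  · intro u v w hw
    exact hright v _ (hleft _ hw u)
end
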